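/- If f : [0,1] → ℝ is absolutely continuous, f' ∈ L¹(0,1), and there exist γ₁, Γ₁ with γ₁ ≤ f'(t) ≤ Γ₁ for all t ∈ [0,1], then |Q(f)| ≤ ((Γ₁ - γ₁)/32)(5 - 2√2), where Q(f) = ∫₀¹ f(t) dt - (√2/8) f(0) - (1 - √2/4) f(1/2) - (√2/8) f(1). -/

import Mathlib

open MeasureTheory Real Set intervalIntegral

lemma fub (g : ℝ → ℝ) (hg : IntegrableOn g (Ioc (0:ℝ) 1) volume) :
    ∫ t in Ioc (0:ℝ) 1, (∫ s in Ioc (0:ℝ) t, g s) = ∫ s in Ioc (0:ℝ) 1, (1-s) * g s := by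
  set μ := volume.restrict (Ioc (0:ℝ) 1) with hμ
  set H : ℝ × ℝ → ℝ := fun p => (Ioc (0:ℝ) p.1).indicator g p.2 with hHdef
  have hA : MeasurableSet {p : ℝ × ℝ | 0 < p.2 ∧ p.2 ≤ p.1} :=
    (measurableSet_lt measurable_const measurable_snd).inter
      (measurableSet_le measurable_snd measurable_fst)
  have hHeq : H = ({p : ℝ × ℝ | 0 < p.2 ∧ p.2 ≤ p.1}).indicator (fun p => g p.2) := by
    funext p
    by_cases h : 0 < p.2 ∧ p.2 ≤ p.1 <;>
      simp [hHdef, Set.indicator, Set.mem_Ioc, h]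
  have hgm : AEStronglyMeasurable g μ := hg.aestronglyMeasurable
  have hH : AEStronglyMeasurable H (μ.prod μ) := by
    rw [hHeq]; exact (hgm.comp_snd).indicator hA
  have hInt : Integrable H (μ.prod μ) := by
    rw [integrable_prod_iff hH]
    constructor
    · refine ae_of_all _ fun t => ?_
      exact (hg.indicator measurableSet_Ioc)
    · refine Integrable.mono' (integrable_const (∫ s, ‖g s‖ ∂μ)) hH.norm.integral_prod_right' ?_
      refine ae_of_all _ fun t => ?_
      have h1 : (0:ℝ) ≤ ∫ s, ‖H (t, s)‖ ∂μ := integral_nonneg fun s => norm_nonneg _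
      rw [Real.norm_of_nonneg h1]
      refine integral_mono ((hg.indicator measurableSet_Ioc).norm) hg.norm fun s => ?_
      exact norm_indicator_le_norm_self g s
  have hswap := integral_integral_swap (f := fun t s => H (t, s)) hInt
  calc ∫ t in Ioc (0:ℝ) 1, (∫ s in Ioc (0:ℝ) t, g s)
      = ∫ t, (∫ s, H (t, s) ∂μ) ∂μ := by
        refine setIntegral_congr_fun measurableSet_Ioc fun t ht => ?_
        rw [hHdef]
        simp only
        rw [MeasureTheory.integral_indicator measurableSet_Ioc, hμ, Measure.restrict_restrict measurableSet_Ioc,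
          Set.Ioc_inter_Ioc]
        congr 1
        simp [ht.2]
    _ = ∫ s, (∫ t, H (t, s) ∂μ) ∂μ := hswap
    _ = ∫ s in Ioc (0:ℝ) 1, (1-s) * g s := by
        refine setIntegral_congr_fun measurableSet_Ioc fun s hs => ?_
        have : (fun t => H (t, s)) = (Ici s).indicator (fun _ => g s) := by
          funext t
          by_cases h : s ≤ t <;>
            simp [hHdef, Set.indicator, Set.mem_Ioc, Set.mem_Ici, h, hs.1]
        rw [this, MeasureTheory.integral_indicator measurableSet_Ici, setIntegral_const, hμ,
          measureReal_restrict_apply measurableSet_Ici]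
        have : Ici s ∩ Ioc 0 1 = Icc s 1 := by
          ext x
          simp only [Set.mem_inter_iff, Set.mem_Ici, Set.mem_Ioc, Set.mem_Icc]
          constructor
          · rintro ⟨h1, _, h3⟩; exact ⟨h1, h3⟩
          · rintro ⟨h1, h2⟩; exact ⟨h1, lt_of_lt_of_le hs.1 h1, h2⟩
        rw [this, Real.volume_real_Icc_of_le (by linarith [hs.2])]
        simp [mul_comm]

theorem stmt_7 (f f' : ℝ → ℝ) (γ₁ Γ₁ : ℝ)
    (hac : ∀ t ∈ Icc (0:ℝ) 1, f t = f 0 + ∫ s in (0:ℝ)..t, f' s)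
    (hint : IntervalIntegrable f' volume 0 1)
    (hbd : ∀ t ∈ Icc (0:ℝ) 1, γ₁ ≤ f' t ∧ f' t ≤ Γ₁) :
    |(∫ t in (0:ℝ)..1, f t) - Real.sqrt 2 / 8 * f 0
        - (1 - Real.sqrt 2 / 4) * f (1/2) - Real.sqrt 2 / 8 * f 1|
      ≤ (Γ₁ - γ₁) / 32 * (5 - 2 * Real.sqrt 2) := by
  have h2 : Real.sqrt 2 ^ 2 = 2 := Real.sq_sqrt (by norm_num)
  have h2n : (0:ℝ) ≤ Real.sqrt 2 := Real.sqrt_nonneg 2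
  have h2lt : Real.sqrt 2 < 2 := by nlinarith
  set a : ℝ := Real.sqrt 2 / 8 with ha_def
  have ha0 : 0 < a := by
    have : 0 < Real.sqrt 2 := Real.sqrt_pos.2 (by norm_num)
    positivity
  have ha12 : a < 1/2 := by rw [ha_def]; linarith
  set m : ℝ := (γ₁ + Γ₁) / 2 with hm_def
  set M : ℝ := (Γ₁ - γ₁) / 2 with hM_def
  have hM0 : 0 ≤ M := by
    have h0 := hbd 0 (by norm_num)
    rw [hM_def]; linarith [h0.1, h0.2]
  -- integrability of f' on subintervals
  have hsub1 : Set.uIcc (0:ℝ) (1/2) ⊆ Set.uIcc (0:ℝ) 1 := by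
    rw [Set.uIcc_of_le (by norm_num : (0:ℝ) ≤ 1/2), Set.uIcc_of_le (by norm_num : (0:ℝ) ≤ 1)]
    exact Set.Icc_subset_Icc le_rfl (by norm_num)
  have hsub2 : Set.uIcc (1/2:ℝ) 1 ⊆ Set.uIcc (0:ℝ) 1 := by
    rw [Set.uIcc_of_le (by norm_num : (1/2:ℝ) ≤ 1), Set.uIcc_of_le (by norm_num : (0:ℝ) ≤ 1)]
    exact Set.Icc_subset_Icc (by norm_num) le_rfl
  have hi1 : IntervalIntegrable f' volume 0 (1/2) := hint.mono_set hsub1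
  have hi2 : IntervalIntegrable f' volume (1/2) 1 := hint.mono_set hsub2
  -- abbreviations
  set P1 : ℝ := ∫ s in (0:ℝ)..(1/2), f' s with hP1
  set P2 : ℝ := ∫ s in (1/2:ℝ)..1, f' s with hP2
  set W1 : ℝ := ∫ s in (0:ℝ)..(1/2), (1-s) * f' s with hW1
  set W2 : ℝ := ∫ s in (1/2:ℝ)..1, (1-s) * f' s with hW2
  have hcont1 : ContinuousOn (fun s : ℝ => 1 - s) (Set.uIcc (0:ℝ) (1/2)) :=
    (continuous_const.sub continuous_id).continuousOn
  have hcont2 : ContinuousOn (fun s : ℝ => 1 - s) (Set.uIcc (1/2:ℝ) 1) :=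
    (continuous_const.sub continuous_id).continuousOn
  have hW1i : IntervalIntegrable (fun s => (1-s) * f' s) volume 0 (1/2) :=
    hi1.continuousOn_mul hcont1
  have hW2i : IntervalIntegrable (fun s => (1-s) * f' s) volume (1/2) 1 :=
    hi2.continuousOn_mul hcont2
  -- values at nodes
  have hf12 : f (1/2) = f 0 + P1 := hac (1/2) (by norm_num)
  have hf1 : f 1 = f 0 + (P1 + P2) := by
    rw [hac 1 (by norm_num)]
    congr 1
    exact (integral_add_adjacent_intervals hi1 hi2).symm
  -- the key identity via Fubini
  have hIoc : IntegrableOn f' (Ioc (0:ℝ) 1) volume := hint.1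
  have key : (∫ t in (0:ℝ)..1, f t) = f 0 + (W1 + W2) := by
    have hFc : ContinuousOn (fun t => ∫ s in (0:ℝ)..t, f' s) (Set.uIcc (0:ℝ) 1) := by
      apply continuousOn_primitive_interval
      rw [Set.uIcc_of_le (by norm_num : (0:ℝ) ≤ 1)]
      exact (integrableOn_Icc_iff_integrableOn_Ioc).2 hIoc
    have hFi : IntervalIntegrable (fun t => ∫ s in (0:ℝ)..t, f' s) volume 0 1 :=
      hFc.intervalIntegrable
    have e1 : (∫ t in (0:ℝ)..1, f t)
        = ∫ t in (0:ℝ)..1, (f 0 + ∫ s in (0:ℝ)..t, f' s) := by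
      apply integral_congr
      intro t ht
      rw [Set.uIcc_of_le (by norm_num : (0:ℝ) ≤ 1)] at ht
      exact hac t ht
    rw [e1, integral_add intervalIntegrable_const hFi, intervalIntegral.integral_const]
    congr 1
    · simp
    have e2 : (∫ t in (0:ℝ)..1, (∫ s in (0:ℝ)..t, f' s))
        = ∫ s in (0:ℝ)..1, (1-s) * f' s := by
      rw [integral_of_le (by norm_num : (0:ℝ) ≤ 1), integral_of_le (by norm_num : (0:ℝ) ≤ 1),
        ← fub f' hIoc]
      refine setIntegral_congr_fun measurableSet_Ioc fun t ht => ?_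
      exact integral_of_le ht.1.le
    rw [e2]
    exact (integral_add_adjacent_intervals hW1i hW2i).symm
  -- kernel integrals
  set A' : ℝ := ∫ s in (0:ℝ)..(1/2), (a - s) * (f' s - m) with hA'
  set B' : ℝ := ∫ s in (1/2:ℝ)..1, (1 - a - s) * (f' s - m) with hB'
  have hA'val : A' = W1 - (1-a) * P1 - m * (a/2 - 1/8) := by
    have e : A' = ∫ s in (0:ℝ)..(1/2), ((1-s) * f' s - (1-a) * f' s - m * (a - s)) := by
      apply integral_congr; intro s _; ring
    have hk1 : IntervalIntegrable (fun s : ℝ => m * (a - s)) volume 0 (1/2) :=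
      Continuous.intervalIntegrable (by fun_prop) _ _
    have hsum1 : IntervalIntegrable (fun s : ℝ => (1-a) * f' s) volume 0 (1/2) :=
      hi1.const_mul _
    rw [e, integral_sub (hW1i.sub hsum1) hk1, integral_sub hW1i hsum1,
      intervalIntegral.integral_const_mul, intervalIntegral.integral_const_mul]
    have : (∫ s in (0:ℝ)..(1/2), (a - s)) = a/2 - 1/8 := by
      rw [integral_sub intervalIntegrable_const intervalIntegrable_id,
        intervalIntegral.integral_const, integral_id]
      simp only [smul_eq_mul]; ring
    rw [this]
  have hB'val : B' = W2 - a * P2 - m * (1/8 - a/2) := by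
    have e : B' = ∫ s in (1/2:ℝ)..1, ((1-s) * f' s - a * f' s - m * (1 - a - s)) := by
      apply integral_congr; intro s _; ring
    have hk2 : IntervalIntegrable (fun s : ℝ => m * (1 - a - s)) volume (1/2) 1 :=
      Continuous.intervalIntegrable (by fun_prop) _ _
    have hsum2 : IntervalIntegrable (fun s : ℝ => a * f' s) volume (1/2) 1 :=
      hi2.const_mul _
    rw [e, integral_sub (hW2i.sub hsum2) hk2, integral_sub hW2i hsum2,
      intervalIntegral.integral_const_mul, intervalIntegral.integral_const_mul]
    have : (∫ s in (1/2:ℝ)..1, (1 - a - s)) = 1/8 - a/2 := by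
      have e' : EqOn (fun s : ℝ => 1 - a - s) (fun s : ℝ => (1 - a) - s) (uIcc (1/2:ℝ) 1) :=
        fun s _ => by ring
      rw [integral_congr e', integral_sub intervalIntegrable_const intervalIntegrable_id,
        intervalIntegral.integral_const, integral_id]
      simp only [smul_eq_mul]; ring
    rw [this]
  -- pointwise bound
  have habs : ∀ t ∈ Icc (0:ℝ) 1, |f' t - m| ≤ M := by
    intro t ht
    have h := hbd t ht
    rw [abs_le, hm_def, hM_def]
    constructor <;> [linarith [h.1]; linarith [h.2]]
  -- kernel absolute integrals
  have hcka : Continuous (fun s : ℝ => |a - s|) := by fun_prop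
  have hckb : Continuous (fun s : ℝ => |1 - a - s|) := by fun_prop
  have hker1 : (∫ s in (0:ℝ)..(1/2), |a - s|) = a^2 - a/2 + 1/8 := by
    rw [← integral_add_adjacent_intervals (a := (0:ℝ)) (b := a) (c := 1/2)
      (hcka.intervalIntegrable _ _) (hcka.intervalIntegrable _ _)]
    have e1 : (∫ s in (0:ℝ)..a, |a - s|) = ∫ s in (0:ℝ)..a, (a - s) := by
      apply integral_congr; intro s hs
      rw [Set.uIcc_of_le ha0.le] at hs
      exact abs_of_nonneg (by linarith [hs.2])
    have e2 : (∫ s in a..(1/2:ℝ), |a - s|) = ∫ s in a..(1/2:ℝ), (s - a) := by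
      apply integral_congr; intro s hs
      rw [Set.uIcc_of_le ha12.le] at hs
      show |a - s| = s - a
      rw [abs_sub_comm]; exact abs_of_nonneg (by linarith [hs.1])
    rw [e1, e2, integral_sub intervalIntegrable_const intervalIntegrable_id,
      integral_sub intervalIntegrable_id intervalIntegrable_const,
      intervalIntegral.integral_const, intervalIntegral.integral_const,
      integral_id, integral_id]
    simp only [smul_eq_mul]; ring
  have hker2 : (∫ s in (1/2:ℝ)..1, |1 - a - s|) = a^2 - a/2 + 1/8 := by
    have hb1 : (1/2:ℝ) ≤ 1 - a := by linarith
    have hb2 : (1 - a) ≤ (1:ℝ) := by linarith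
    rw [← integral_add_adjacent_intervals (a := (1/2:ℝ)) (b := 1 - a) (c := 1)
      (hckb.intervalIntegrable _ _) (hckb.intervalIntegrable _ _)]
    have e1 : (∫ s in (1/2:ℝ)..(1 - a), |1 - a - s|) = ∫ s in (1/2:ℝ)..(1 - a), (1 - a - s) := by
      apply integral_congr; intro s hs
      rw [Set.uIcc_of_le hb1] at hs
      exact abs_of_nonneg (by linarith [hs.2])
    have e2 : (∫ s in (1 - a)..(1:ℝ), |1 - a - s|) = ∫ s in (1 - a)..(1:ℝ), (s - (1 - a)) := by
      apply integral_congr; intro s hs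
      rw [Set.uIcc_of_le hb2] at hs
      show |1 - a - s| = s - (1 - a)
      rw [abs_sub_comm]; exact abs_of_nonneg (by linarith [hs.1])
    have e1' : (∫ s in (1/2:ℝ)..(1 - a), (1 - a - s)) = ∫ s in (1/2:ℝ)..(1 - a), ((1 - a) - s) := by
      apply integral_congr; intro s _; ring
    rw [e1, e2, e1', integral_sub intervalIntegrable_const intervalIntegrable_id,
      integral_sub intervalIntegrable_id intervalIntegrable_const,
      intervalIntegral.integral_const, intervalIntegral.integral_const,
      integral_id, integral_id]
    simp only [smul_eq_mul]; ring
  have c1nn : (0:ℝ) ≤ a^2 - a/2 + 1/8 := by nlinarith [sq_nonneg (a - 1/4)]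
  -- bounds on A' and B'
  have hA'bd : |A'| ≤ (a^2 - a/2 + 1/8) * M := by
    have hle : ∀ᵐ t ∂(volume.restrict (Set.uIoc (0:ℝ) (1/2))),
        ‖(a - t) * (f' t - m)‖ ≤ |a - t| * M := by
      rw [Set.uIoc_of_le (by norm_num : (0:ℝ) ≤ 1/2)]
      refine ae_restrict_of_forall_mem measurableSet_Ioc fun t ht => ?_
      have htI : t ∈ Icc (0:ℝ) 1 := ⟨ht.1.le, by linarith [ht.2]⟩
      rw [Real.norm_eq_abs, abs_mul]
      exact mul_le_mul_of_nonneg_left (habs t htI) (abs_nonneg _)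
    have hgi : IntervalIntegrable (fun t : ℝ => |a - t| * M) volume 0 (1/2) :=
      Continuous.intervalIntegrable (by fun_prop) _ _
    have h1 := intervalIntegral.norm_integral_le_abs_of_norm_le hle hgi
    rw [Real.norm_eq_abs] at h1
    have h2 : (∫ t in (0:ℝ)..(1/2), |a - t| * M) = (a^2 - a/2 + 1/8) * M := by
      rw [intervalIntegral.integral_mul_const, hker1]
    rw [h2, abs_of_nonneg (mul_nonneg c1nn hM0)] at h1
    exact h1
  have hB'bd : |B'| ≤ (a^2 - a/2 + 1/8) * M := by
    have hle : ∀ᵐ t ∂(volume.restrict (Set.uIoc (1/2:ℝ) 1)),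
        ‖(1 - a - t) * (f' t - m)‖ ≤ |1 - a - t| * M := by
      rw [Set.uIoc_of_le (by norm_num : (1/2:ℝ) ≤ 1)]
      refine ae_restrict_of_forall_mem measurableSet_Ioc fun t ht => ?_
      have htI : t ∈ Icc (0:ℝ) 1 := ⟨by linarith [ht.1], ht.2⟩
      rw [Real.norm_eq_abs, abs_mul]
      exact mul_le_mul_of_nonneg_left (habs t htI) (abs_nonneg _)
    have hgi : IntervalIntegrable (fun t : ℝ => |1 - a - t| * M) volume (1/2) 1 :=
      Continuous.intervalIntegrable (by fun_prop) _ _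
    have h1 := intervalIntegral.norm_integral_le_abs_of_norm_le hle hgi
    rw [Real.norm_eq_abs] at h1
    have h2 : (∫ t in (1/2:ℝ)..1, |1 - a - t| * M) = (a^2 - a/2 + 1/8) * M := by
      rw [intervalIntegral.integral_mul_const, hker2]
    rw [h2, abs_of_nonneg (mul_nonneg c1nn hM0)] at h1
    exact h1
  -- assemble
  have hQ : (∫ t in (0:ℝ)..1, f t) - a * f 0
      - (1 - Real.sqrt 2 / 4) * f (1/2) - a * f 1 = A' + B' := by
    rw [key, hf12, hf1, hA'val, hB'val, ha_def, hm_def]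
    ring
  rw [hQ]
  calc |A' + B'| ≤ |A'| + |B'| := abs_add_le _ _
    _ ≤ (a^2 - a/2 + 1/8) * M + (a^2 - a/2 + 1/8) * M := add_le_add hA'bd hB'bd
    _ = (Γ₁ - γ₁) / 32 * (5 - 2 * Real.sqrt 2) := by
        rw [ha_def, hM_def]
        linear_combination ((Γ₁ - γ₁)/64) * h2
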